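/- Let k be a natural number and let C > 0, M₀ > 0 and s₀ ≥ max{1, g(1)} be real numbers. Suppose H : ℝ → ℝ satisfies H(s) ≥ 0 for all s ≥ 0 and H(s) ≥ C·exp(s/M₀) for all s ≥ s₀. Then there exist constants C₁ > 0 and C₂ > 0 such that H(g(u)) ≥ C₁·u^{k/(2α)} − C₂ for all u ≥ 0. -/

import Mathlib

open Real Filter Set intervalIntegral

set_option maxHeartbeats 1000000

theorem H_lower_bound_polynomial (N : ℕ) (hN : 2 ≤ N) (α : ℝ) (hα : 1 / 2 < α)
    (g : ℝ → ℝ) (hg_diff : Differentiable ℝ g) (hg_zero : g 0 = 0)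
    (hg_odd : ∀ t : ℝ, g (-t) = -g t)
    (hg_deriv : ∀ t : ℝ, deriv g t =
      (1 + (2 * α) ^ ((N : ℝ) - 1) * |g t| ^ ((N : ℝ) * (2 * α - 1))) ^ (-(1 / (N : ℝ))))
    (k : ℕ) (C M₀ s₀ : ℝ) (hC : 0 < C) (hM₀ : 0 < M₀) (hs₀ : max 1 (g 1) ≤ s₀)
    (H : ℝ → ℝ) (hH_nonneg : ∀ s : ℝ, 0 ≤ s → 0 ≤ H s)
    (hH_exp : ∀ s : ℝ, s₀ ≤ s → C * Real.exp (s / M₀) ≤ H s)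
    : ∃ C₁ > (0 : ℝ), ∃ C₂ > (0 : ℝ), ∀ u : ℝ, 0 ≤ u →
        C₁ * u ^ ((k : ℝ) / (2 * α)) - C₂ ≤ H (g u) := by
  have hNpos : (0:ℝ) < N := by positivity
  set A : ℝ := (2 * α) ^ ((N : ℝ) - 1) with hA
  set β : ℝ := (N : ℝ) * (2 * α - 1) with hβ
  have hApos : 0 < A := Real.rpow_pos_of_pos (by linarith) _
  have hβpos : 0 < β := by
    have : (0:ℝ) < 2 * α - 1 := by linarith
    positivity
  have hs₀1 : (1:ℝ) ≤ s₀ := le_trans (le_max_left _ _) hs₀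
  -- ψ : the reciprocal of g'
  set ψ : ℝ → ℝ := fun s => (1 + A * |s| ^ β) ^ ((1 : ℝ) / N) with hψdef
  have hbase : ∀ s : ℝ, (1:ℝ) ≤ 1 + A * |s| ^ β := by
    intro s
    have : 0 ≤ A * |s| ^ β := by positivity
    linarith
  have hψcont : Continuous ψ := by
    apply Continuous.rpow_const
    · exact continuous_const.add (continuous_const.mul
        (continuous_abs.rpow_const (fun x => Or.inr hβpos.le)))
    · intro x; exact Or.inr (by positivity)
  -- g is strictly monotone and nonneg on [0, ∞)
  have hgpos : ∀ t : ℝ, 0 < deriv g t := by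
    intro t; rw [hg_deriv t]
    exact Real.rpow_pos_of_pos (lt_of_lt_of_le one_pos (hbase _)) _
  have hgmono : StrictMono g := strictMono_of_deriv_pos hgpos
  have hgnn : ∀ u : ℝ, 0 ≤ u → 0 ≤ g u := by
    intro u hu; rw [← hg_zero]; exact hgmono.monotone hu
  -- F y = ∫ 0..y ψ
  set F : ℝ → ℝ := fun y => ∫ s in (0:ℝ)..y, ψ s with hF
  have hFderiv : ∀ y : ℝ, HasDerivAt F (ψ y) y := by
    intro y
    exact intervalIntegral.integral_hasDerivAt_right
      (hψcont.intervalIntegrable _ _)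
      (hψcont.aestronglyMeasurable.stronglyMeasurableAtFilter)
      hψcont.continuousAt
  -- F (g t) = t
  have key : ∀ t : ℝ, F (g t) = t := by
    have hcomp : ∀ t : ℝ, HasDerivAt (fun t => F (g t) - t) 0 t := by
      intro t
      have h1 : HasDerivAt (fun t => F (g t)) (ψ (g t) * deriv g t) t :=
        (hFderiv (g t)).comp t (hg_diff t).hasDerivAt
      have h2 : ψ (g t) * deriv g t = 1 := by
        rw [hg_deriv t, hψdef]
        have hb : (0:ℝ) < 1 + A * |g t| ^ β := lt_of_lt_of_le one_pos (hbase _)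
        rw [← Real.rpow_add hb]
        simp
      rw [h2] at h1
      exact (h1.sub (hasDerivAt_id' t)).congr_deriv (by norm_num)
    have hconst := is_const_of_deriv_eq_zero
      (fun t => (hcomp t).differentiableAt) (fun t => (hcomp t).deriv)
    intro t
    have := hconst t 0
    simp [hg_zero, hF, intervalIntegral.integral_same] at this
    linarith
  -- upper bound for F on [0, y]
  have hFle : ∀ y : ℝ, 0 ≤ y → F y ≤ y * (1 + A * y ^ β) := by
    intro y hy
    have hb : ∀ s ∈ Icc (0:ℝ) y, ψ s ≤ 1 + A * y ^ β := by
      intro s hs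
      have habs : |s| = s := abs_of_nonneg hs.1
      have h1 : ψ s ≤ 1 + A * |s| ^ β := by
        calc ψ s ≤ (1 + A * |s| ^ β) ^ (1:ℝ) :=
              Real.rpow_le_rpow_of_exponent_le (hbase s)
                (by rw [div_le_one hNpos]; exact_mod_cast Nat.one_le_of_lt hN)
          _ = 1 + A * |s| ^ β := Real.rpow_one _
      have h2 : |s| ^ β ≤ y ^ β := by
        rw [habs]; exact Real.rpow_le_rpow hs.1 hs.2 hβpos.le
      calc ψ s ≤ 1 + A * |s| ^ β := h1
        _ ≤ 1 + A * y ^ β := by nlinarith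
    calc F y ≤ ∫ s in (0:ℝ)..y, (1 + A * y ^ β) :=
          intervalIntegral.integral_mono_on hy (hψcont.intervalIntegrable _ _)
            (intervalIntegrable_const) hb
      _ = y * (1 + A * y ^ β) := by simp [intervalIntegral.integral_const]; ring
  -- main inequality: u ≤ g u * (1 + A * (g u)^β)
  have hmain : ∀ u : ℝ, 0 ≤ u → u ≤ g u * (1 + A * (g u) ^ β) := by
    intro u hu
    calc u = F (g u) := (key u).symm
      _ ≤ g u * (1 + A * (g u) ^ β) := hFle _ (hgnn u hu)
  -- constants
  set m : ℕ := k * N with hm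
  set q : ℝ := (k : ℝ) / (2 * α) with hq
  set r : ℝ := (m : ℝ) / (β + 1) with hr
  have hβ1 : (0:ℝ) < β + 1 := by linarith
  have hqr : q ≤ r := by
    rw [hq, hr, div_le_div_iff₀ (by linarith) hβ1]
    have hNk : (k:ℝ) * (N:ℝ) = (m:ℝ) := by push_cast [hm]; ring
    have hN1 : (1:ℝ) ≤ (N:ℝ) := by exact_mod_cast Nat.one_le_of_lt hN
    have hk0 : (0:ℝ) ≤ (k:ℝ) := Nat.cast_nonneg k
    nlinarith [hk0, hN1]
  have hqnn : 0 ≤ q := by positivity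
  have hrnn : 0 ≤ r := by positivity
  set T : ℝ := (1 + A) * s₀ ^ (β + 1) with hT
  have hs₀β : s₀ ≤ s₀ ^ (β + 1) := by
    nth_rewrite 1 [← Real.rpow_one s₀]
    exact Real.rpow_le_rpow_of_exponent_le hs₀1 (by linarith)
  have hT1 : (1:ℝ) ≤ T := by
    have h1 : (1:ℝ) ≤ s₀ ^ (β + 1) := le_trans hs₀1 hs₀β
    nlinarith
  set C₁ : ℝ := C / ((1 + A) ^ r * M₀ ^ m * (m.factorial : ℝ)) with hC₁
  have hC₁pos : 0 < C₁ := by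
    apply div_pos hC
    have h1 : (0:ℝ) < (1 + A) ^ r := Real.rpow_pos_of_pos (by linarith) _
    have h2 : (0:ℝ) < M₀ ^ m := pow_pos hM₀ _
    have h3 : (0:ℝ) < (m.factorial : ℝ) := by exact_mod_cast m.factorial_pos
    positivity
  refine ⟨C₁, hC₁pos, C₁ * T ^ q + 1, by positivity, fun u hu => ?_⟩
  by_cases hcase : u ≤ T
  · -- small u: use H ≥ 0
    have h1 : u ^ q ≤ T ^ q := Real.rpow_le_rpow hu hcase hqnn
    have h2 : 0 ≤ H (g u) := hH_nonneg _ (hgnn u hu)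
    have h3 : C₁ * u ^ q ≤ C₁ * T ^ q := by nlinarith
    linarith
  · push_neg at hcase
    set y := g u with hy
    have hynn : 0 ≤ y := hgnn u hu
    have hkey : u ≤ y * (1 + A * y ^ β) := hmain u hu
    -- y ≥ s₀
    have hys₀ : s₀ ≤ y := by
      by_contra hlt
      push_neg at hlt
      have hyβ : y ^ β ≤ s₀ ^ β := Real.rpow_le_rpow hynn hlt.le hβpos.le
      have hss : s₀ * s₀ ^ β = s₀ ^ (β + 1) := by
        rw [Real.rpow_add (by linarith : (0:ℝ) < s₀), Real.rpow_one]; ring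
      have : u ≤ T := by
        calc u ≤ y * (1 + A * y ^ β) := hkey
          _ ≤ s₀ * (1 + A * s₀ ^ β) := by
              have hmm : A * y ^ β ≤ A * s₀ ^ β := mul_le_mul_of_nonneg_left hyβ hApos.le
              have h0 : 0 ≤ A * y ^ β := mul_nonneg hApos.le (Real.rpow_nonneg hynn β)
              exact mul_le_mul hlt.le (by linarith) (by linarith) (by linarith)
          _ = s₀ + A * s₀ ^ (β + 1) := by rw [← hss]; ring
          _ ≤ (1 + A) * s₀ ^ (β + 1) := by nlinarith [hs₀β]
      linarith
    have hy1 : (1:ℝ) ≤ y := le_trans hs₀1 hys₀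
    -- u ≤ (1+A) * y^(β+1)
    have hyy : y * y ^ β = y ^ (β + 1) := by
      rw [Real.rpow_add (by linarith : (0:ℝ) < y), Real.rpow_one]; ring
    have hyβ1 : y ≤ y ^ (β + 1) := by
      nth_rewrite 1 [← Real.rpow_one y]
      exact Real.rpow_le_rpow_of_exponent_le hy1 (by linarith)
    have hub : u ≤ (1 + A) * y ^ (β + 1) := by
      calc u ≤ y * (1 + A * y ^ β) := hkey
        _ = y + A * (y * y ^ β) := by ring
        _ = y + A * y ^ (β + 1) := by rw [hyy]
        _ ≤ (1 + A) * y ^ (β + 1) := by nlinarith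
    have h1A : (0:ℝ) < 1 + A := by linarith
    have hdiv : u / (1 + A) ≤ y ^ (β + 1) := by
      rw [div_le_iff₀ h1A]; linarith [hub]
    -- raise to power r
    have hrp : (u / (1 + A)) ^ r ≤ y ^ (m : ℝ) := by
      calc (u / (1 + A)) ^ r ≤ (y ^ (β + 1)) ^ r :=
            Real.rpow_le_rpow (by positivity) hdiv hrnn
        _ = y ^ ((β + 1) * r) := (Real.rpow_mul hynn _ _).symm
        _ = y ^ (m : ℝ) := by rw [hr, mul_div_cancel₀ _ (ne_of_gt hβ1)]
    have hym : y ^ (m:ℝ) = y ^ m := Real.rpow_natCast y m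
    -- exponential bound
    have hexp : (y / M₀) ^ m / (m.factorial : ℝ) ≤ Real.exp (y / M₀) :=
      Real.pow_div_factorial_le_exp (y / M₀) (by positivity) m
    have hHge : C * Real.exp (y / M₀) ≤ H y := hH_exp y hys₀
    have hmfpos : (0:ℝ) < (m.factorial : ℝ) := by exact_mod_cast m.factorial_pos
    have hM₀m : (0:ℝ) < M₀ ^ m := pow_pos hM₀ _
    have h1Ar : (0:ℝ) < (1 + A) ^ r := Real.rpow_pos_of_pos h1A _
    -- C₁ * u^r ≤ C * exp(y/M₀)
    have hchain : C₁ * u ^ r ≤ C * Real.exp (y / M₀) := by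
      have hur : u ^ r / (1 + A) ^ r = (u / (1 + A)) ^ r :=
        (Real.div_rpow hu h1A.le r).symm
      have e1 : u ^ r = (u / (1 + A)) ^ r * (1 + A) ^ r := by
        rw [← hur, div_mul_cancel₀ _ h1Ar.ne']
      have e2 : (u / (1 + A)) ^ r ≤ y ^ m := by rw [← hym]; exact hrp
      have e3 : y ^ m ≤ Real.exp (y / M₀) * (M₀ ^ m * (m.factorial : ℝ)) := by
        have h8 : y ^ m / (M₀ ^ m * (m.factorial : ℝ)) ≤ Real.exp (y / M₀) := by
          rw [← div_div, ← div_pow]; exact hexp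
        exact (div_le_iff₀ (by positivity)).mp h8
      have hurnn : 0 ≤ (u / (1 + A)) ^ r := Real.rpow_nonneg (by positivity) r
      rw [hC₁, div_mul_eq_mul_div, div_le_iff₀ (by positivity)]
      calc C * u ^ r = C * ((u / (1 + A)) ^ r * (1 + A) ^ r) := by rw [← e1]
        _ ≤ C * (y ^ m * (1 + A) ^ r) :=
            mul_le_mul_of_nonneg_left (mul_le_mul_of_nonneg_right e2 h1Ar.le) hC.le
        _ ≤ C * (Real.exp (y / M₀) * (M₀ ^ m * (m.factorial : ℝ)) * (1 + A) ^ r) :=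
            mul_le_mul_of_nonneg_left (mul_le_mul_of_nonneg_right e3 h1Ar.le) hC.le
        _ = C * Real.exp (y / M₀) * ((1 + A) ^ r * M₀ ^ m * (m.factorial : ℝ)) := by ring
    have huq : u ^ q ≤ u ^ r :=
      Real.rpow_le_rpow_of_exponent_le (le_trans hT1 hcase.le) hqr
    have hTq : 0 ≤ T ^ q := Real.rpow_nonneg (by linarith) q
    have hqq : C₁ * u ^ q ≤ C₁ * u ^ r := mul_le_mul_of_nonneg_left huq hC₁pos.le
    calc C₁ * u ^ q - (C₁ * T ^ q + 1) ≤ C₁ * u ^ r := by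
          nlinarith [mul_nonneg hC₁pos.le hTq]
      _ ≤ C * Real.exp (y / M₀) := hchain
      _ ≤ H y := hHge
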